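/- arXiv:2202.00536 — 4 statements merged into one kernel-verified Lean document; each statement's English description precedes it below -/
import Mathlib

section
/- Let G and H be groups with finite generating sets S₀ and T₀, and let q : G → H be a group homomorphism which is also an (L₀,C₀)-quasi-isometry from (G,d_{S₀}) to (H,d_{T₀}). If T ⊆ H is a generating set of H containing T₀, then there exists a generating set S ⊆ G of G containing S₀ such that q is a quasi-isometry from (G,d_S) to (H,d_T). -/
/-- Word metric on a group `G` associated to a (generating) set `S`:
`wordDist S a b` is the least `n` such that `a⁻¹ * b` is a product of `n`
elements of `S ∪ S⁻¹`. -/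
noncomputable def wordDist {G : Type*} [Group G] (S : Set G) (a b : G) : ℕ :=
  sInf {n : ℕ | ∃ l : List G, (∀ x ∈ l, x ∈ S ∨ x⁻¹ ∈ S) ∧ l.length = n ∧ l.prod = a⁻¹ * b}

/-- `q` is an `(L,C)`-quasi-isometric embedding with respect to the
distance functions `dX` and `dY`. -/
def IsQIEmb {X Y : Type*} (L C : ℝ) (dX : X → X → ℝ) (dY : Y → Y → ℝ) (q : X → Y) : Prop :=
  ∀ a b, dX a b / L - C ≤ dY (q a) (q b) ∧ dY (q a) (q b) ≤ L * dX a b + C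

/-- `q` is an `(L,C)`-quasi-isometry: an `(L,C)`-quasi-isometric embedding whose image is
`C`-dense. -/
def IsQI {X Y : Type*} (L C : ℝ) (dX : X → X → ℝ) (dY : Y → Y → ℝ) (q : X → Y) : Prop :=
  IsQIEmb L C dX dY q ∧ ∀ y, ∃ x, dY y (q x) ≤ C


section lemmas
variable {G : Type*} [Group G] {S : Set G}

lemma wordSet_nonempty (hS : Subgroup.closure S = ⊤) (a b : G) :
    {n : ℕ | ∃ l : List G, (∀ x ∈ l, x ∈ S ∨ x⁻¹ ∈ S) ∧ l.length = n ∧ l.prod = a⁻¹ * b}.Nonempty := by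
  have h : a⁻¹ * b ∈ Subgroup.closure S := hS ▸ Subgroup.mem_top _
  have h2 : a⁻¹ * b ∈ Submonoid.closure (S ∪ S⁻¹) := by
    rw [← Subgroup.closure_toSubmonoid] at *; exact h
  obtain ⟨l, hl, hp⟩ := Submonoid.exists_list_of_mem_closure h2
  refine ⟨l.length, l, fun x hx => ?_, rfl, hp⟩
  rcases hl x hx with h | h
  · exact Or.inl h
  · exact Or.inr h

lemma wordDist_le (a b : G) (l : List G) (hl : ∀ x ∈ l, x ∈ S ∨ x⁻¹ ∈ S)
    (hp : l.prod = a⁻¹ * b) : wordDist S a b ≤ l.length :=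
  Nat.sInf_le ⟨l, hl, rfl, hp⟩

lemma wordDist_exists (hS : Subgroup.closure S = ⊤) (a b : G) :
    ∃ l : List G, (∀ x ∈ l, x ∈ S ∨ x⁻¹ ∈ S) ∧ l.length = wordDist S a b ∧ l.prod = a⁻¹ * b :=
  Nat.sInf_mem (wordSet_nonempty hS a b)

lemma wordDist_congr (a b c d : G) (h : a⁻¹ * b = c⁻¹ * d) :
    wordDist S a b = wordDist S c d := by unfold wordDist; rw [h]

lemma wordDist_self (a : G) : wordDist S a a = 0 :=
  Nat.le_zero.mp (by simpa using wordDist_le a a [] (by simp) (by simp))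

lemma wordDist_symm (a b : G) : wordDist S a b = wordDist S b a := by
  unfold wordDist
  congr 1
  ext n
  constructor <;> rintro ⟨l, hl, hlen, hp⟩ <;>
    refine ⟨(l.map fun x => x⁻¹).reverse, ?_, by simp [hlen], by
      rw [← List.prod_inv_reverse, hp]; group⟩ <;>
    · intro x hx
      simp only [List.mem_reverse, List.mem_map] at hx
      obtain ⟨y, hy, rfl⟩ := hx
      rcases hl y hy with h | h
      · exact Or.inr (by simpa using h)
      · exact Or.inl h

lemma wordDist_triangle (hS : Subgroup.closure S = ⊤) (a b c : G) :
    wordDist S a c ≤ wordDist S a b + wordDist S b c := by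
  obtain ⟨l₁, h₁, hlen₁, hp₁⟩ := wordDist_exists hS a b
  obtain ⟨l₂, h₂, hlen₂, hp₂⟩ := wordDist_exists hS b c
  have := wordDist_le a c (l₁ ++ l₂) (by
    intro x hx; rcases List.mem_append.mp hx with h | h
    · exact h₁ x h
    · exact h₂ x h) (by rw [List.prod_append, hp₁, hp₂]; group)
  simpa [hlen₁, hlen₂] using this

lemma wordDist_mono {S T : Set G} (hST : S ⊆ T) (hS : Subgroup.closure S = ⊤) (a b : G) :
    wordDist T a b ≤ wordDist S a b := by
  obtain ⟨l, hl, hlen, hp⟩ := wordDist_exists hS a b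
  have := wordDist_le a b l (fun x hx => (hl x hx).imp (@hST x) (@hST x⁻¹)) hp
  omega

lemma wordDist_single (a : G) (ha : a ∈ S ∨ a⁻¹ ∈ S) : wordDist S 1 a ≤ 1 := by
  have := wordDist_le (S := S) 1 a [a] (by simpa using ha) (by simp)
  simpa using this

lemma wordDist_one_inv (a : G) : wordDist S 1 a⁻¹ = wordDist S 1 a :=
  (wordDist_congr 1 a⁻¹ a 1 (by group)).trans (wordDist_symm a 1)

end lemmas

theorem stmt3 {G H : Type*} [Group G] [Group H]
    (S₀ : Set G) (T₀ T : Set H)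
    (hS₀fin : S₀.Finite) (hS₀gen : Subgroup.closure S₀ = ⊤)
    (hT₀fin : T₀.Finite) (hT₀gen : Subgroup.closure T₀ = ⊤)
    (hT₀T : T₀ ⊆ T) (hTgen : Subgroup.closure T = ⊤)
    (q : G →* H)
    (L₀ C₀ : ℝ) (hL₀ : 1 ≤ L₀) (hC₀ : 0 ≤ C₀)
    (hq : IsQI L₀ C₀ (fun a b => (wordDist S₀ a b : ℝ)) (fun a b => (wordDist T₀ a b : ℝ)) q) :
    ∃ S : Set G, S₀ ⊆ S ∧ Subgroup.closure S = ⊤ ∧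
      ∃ L C : ℝ, 1 ≤ L ∧ 0 ≤ C ∧
        IsQI L C (fun a b => (wordDist S a b : ℝ)) (fun a b => (wordDist T a b : ℝ)) q := by
  classical
  set S : Set G := S₀ ∪ {g : G | (wordDist T 1 (q g) : ℝ) ≤ 2 * C₀ + 1} with hSdef
  have hS₀S : S₀ ⊆ S := Set.subset_union_left
  have hSgen : Subgroup.closure S = ⊤ :=
    top_unique (hS₀gen ▸ Subgroup.closure_mono hS₀S)
  have hmemS : ∀ g : G, (wordDist T 1 (q g) : ℝ) ≤ 2 * C₀ + 1 → g ∈ S :=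
    fun g hg => Or.inr hg
  -- per-letter bound
  have hletter : ∀ s : G, (s ∈ S ∨ s⁻¹ ∈ S) →
      (wordDist T 1 (q s) : ℝ) ≤ L₀ + 2 * C₀ := by
    have key : ∀ s : G, s ∈ S → (wordDist T 1 (q s) : ℝ) ≤ L₀ + 2 * C₀ := by
      intro s hs
      rcases hs with hs | hs
      · -- s ∈ S₀
        have h1 : (wordDist T₀ (q 1) (q s) : ℝ) ≤ L₀ * (wordDist S₀ 1 s : ℝ) + C₀ :=
          (hq.1 1 s).2
        have h2 : wordDist S₀ 1 s ≤ 1 := wordDist_single s (Or.inl hs)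
        have h3 : wordDist T 1 (q s) ≤ wordDist T₀ 1 (q s) :=
          wordDist_mono hT₀T hT₀gen 1 (q s)
        rw [map_one] at h1
        have h2' : (wordDist S₀ 1 s : ℝ) ≤ 1 := by exact_mod_cast h2
        have h3' : (wordDist T 1 (q s) : ℝ) ≤ (wordDist T₀ 1 (q s) : ℝ) := by exact_mod_cast h3
        nlinarith [Nat.cast_nonneg (α := ℝ) (wordDist S₀ 1 s)]
      · -- s in the ball part
        have : (wordDist T 1 (q s) : ℝ) ≤ 2 * C₀ + 1 := hs
        linarith
    intro s hs
    rcases hs with hs | hs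
    · exact key s hs
    · have := key s⁻¹ hs
      rw [map_inv, wordDist_one_inv] at this
      exact this
  -- upper bound for words
  have hupper_list : ∀ l : List G, (∀ x ∈ l, x ∈ S ∨ x⁻¹ ∈ S) →
      (wordDist T 1 (q l.prod) : ℝ) ≤ (L₀ + 2 * C₀) * l.length := by
    intro l
    induction l with
    | nil => intro _; simp [wordDist_self]
    | cons s rest ih =>
      intro hl
      have h1 : (wordDist T 1 (q rest.prod) : ℝ) ≤ (L₀ + 2 * C₀) * rest.length :=
        ih fun x hx => hl x (List.mem_cons_of_mem s hx)
      have h2 : (wordDist T 1 (q s) : ℝ) ≤ L₀ + 2 * C₀ :=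
        hletter s (hl s (List.mem_cons_self (a := s) (l := rest)))
      have htri : wordDist T 1 (q (s :: rest).prod) ≤
          wordDist T 1 (q s) + wordDist T (q s) (q (s :: rest).prod) :=
        wordDist_triangle hTgen 1 (q s) _
      have heq : wordDist T (q s) (q (s :: rest).prod) = wordDist T 1 (q rest.prod) := by
        apply wordDist_congr
        simp [List.prod_cons]
      rw [heq] at htri
      have htri' : (wordDist T 1 (q (s :: rest).prod) : ℝ) ≤
          (wordDist T 1 (q s) : ℝ) + (wordDist T 1 (q rest.prod) : ℝ) := by exact_mod_cast htri
      simp only [List.length_cons]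
      push_cast
      nlinarith
  have hupper : ∀ a b : G, (wordDist T (q a) (q b) : ℝ) ≤ (L₀ + 2 * C₀) * (wordDist S a b : ℝ) := by
    intro a b
    obtain ⟨l, hl, hlen, hp⟩ := wordDist_exists hSgen a b
    have heq : wordDist T (q a) (q b) = wordDist T 1 (q l.prod) := by
      apply wordDist_congr
      rw [hp]; simp
    rw [heq, ← hlen]
    exact hupper_list l hl
  -- lower bound via chain lemma
  have hchain : ∀ l : List H, (∀ t ∈ l, t ∈ T ∨ t⁻¹ ∈ T) → ∀ g₀ g₁ : G,
      (wordDist T (q g₀) (q g₁ * (l.prod)⁻¹) : ℝ) ≤ C₀ →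
      wordDist S g₀ g₁ ≤ l.length + 1 := by
    intro l
    induction l with
    | nil =>
      intro _ g₀ g₁ hd
      simp only [List.prod_nil, inv_one, mul_one] at hd
      have hmem : g₀⁻¹ * g₁ ∈ S := by
        apply hmemS
        have : wordDist T 1 (q (g₀⁻¹ * g₁)) = wordDist T (q g₀) (q g₁) := by
          apply wordDist_congr; simp
        rw [this]
        linarith
      have := wordDist_single (S := S) (g₀⁻¹ * g₁) (Or.inl hmem)
      calc wordDist S g₀ g₁ = wordDist S 1 (g₀⁻¹ * g₁) := wordDist_congr _ _ _ _ (by group)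
      _ ≤ 1 := this
    | cons t rest ih =>
      intro hl g₀ g₁ hd
      obtain ⟨g', hg'⟩ := hq.2 (q g₁ * (rest.prod)⁻¹)
      have hg'T : (wordDist T (q g₁ * (rest.prod)⁻¹) (q g') : ℝ) ≤ C₀ := by
        have := wordDist_mono hT₀T hT₀gen (q g₁ * (rest.prod)⁻¹) (q g')
        have h' : ((wordDist T (q g₁ * (rest.prod)⁻¹) (q g') : ℕ) : ℝ) ≤
            ((wordDist T₀ (q g₁ * (rest.prod)⁻¹) (q g') : ℕ) : ℝ) := by exact_mod_cast this
        linarith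
      -- step letter: g₀⁻¹ g' ∈ S
      have hmid : wordDist T (q g₁ * ((t :: rest).prod)⁻¹) (q g₁ * (rest.prod)⁻¹) ≤ 1 := by
        have heq : wordDist T (q g₁ * ((t :: rest).prod)⁻¹) (q g₁ * (rest.prod)⁻¹)
            = wordDist T 1 t := by
          apply wordDist_congr
          simp [List.prod_cons, mul_assoc]
        rw [heq]
        exact wordDist_single t (hl t (List.mem_cons_self (a := t) (l := rest)))
      have hstep : (wordDist T (q g₀) (q g') : ℝ) ≤ 2 * C₀ + 1 := by
        have t1 := wordDist_triangle hTgen (q g₀) (q g₁ * ((t :: rest).prod)⁻¹) (q g')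
        have t2 := wordDist_triangle hTgen (q g₁ * ((t :: rest).prod)⁻¹)
          (q g₁ * (rest.prod)⁻¹) (q g')
        have hg'T' : (wordDist T (q g₁ * (rest.prod)⁻¹) (q g') : ℝ) ≤ C₀ := hg'T
        have t1' : (wordDist T (q g₀) (q g') : ℝ) ≤
            (wordDist T (q g₀) (q g₁ * ((t :: rest).prod)⁻¹) : ℝ) +
            (wordDist T (q g₁ * ((t :: rest).prod)⁻¹) (q g') : ℝ) := by exact_mod_cast t1
        have t2' : (wordDist T (q g₁ * ((t :: rest).prod)⁻¹) (q g') : ℝ) ≤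
            (wordDist T (q g₁ * ((t :: rest).prod)⁻¹) (q g₁ * (rest.prod)⁻¹) : ℝ) +
            (wordDist T (q g₁ * (rest.prod)⁻¹) (q g') : ℝ) := by exact_mod_cast t2
        have hmid' : (wordDist T (q g₁ * ((t :: rest).prod)⁻¹) (q g₁ * (rest.prod)⁻¹) : ℝ) ≤ 1 := by
          exact_mod_cast hmid
        linarith
      have hmemS' : g₀⁻¹ * g' ∈ S := by
        apply hmemS
        have heq : wordDist T 1 (q (g₀⁻¹ * g')) = wordDist T (q g₀) (q g') := by
          apply wordDist_congr; simp
        rw [heq]; exact hstep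
      have h1 : wordDist S g₀ g' ≤ 1 := by
        have := wordDist_single (S := S) (g₀⁻¹ * g') (Or.inl hmemS')
        calc wordDist S g₀ g' = wordDist S 1 (g₀⁻¹ * g') := wordDist_congr _ _ _ _ (by group)
        _ ≤ 1 := this
      -- apply IH
      have hih : wordDist S g' g₁ ≤ rest.length + 1 := by
        apply ih (fun x hx => hl x (List.mem_cons_of_mem t hx))
        rw [wordDist_symm]
        exact hg'T
      have htri := wordDist_triangle hSgen g₀ g' g₁
      simp only [List.length_cons]
      omega
  have hlower : ∀ a b : G, (wordDist S a b : ℝ) ≤ (wordDist T (q a) (q b) : ℝ) + 1 := by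
    intro a b
    obtain ⟨l, hl, hlen, hp⟩ := wordDist_exists hTgen (q a) (q b)
    have : wordDist S a b ≤ l.length + 1 := by
      apply hchain l hl a b
      have heq : q b * (l.prod)⁻¹ = q a := by rw [hp]; group
      rw [heq, wordDist_self]
      exact_mod_cast hC₀
    rw [hlen] at this
    exact_mod_cast this
  refine ⟨S, hS₀S, hSgen, L₀ + 2 * C₀, C₀ + 1, by linarith, by linarith, ?_, ?_⟩
  · intro a b
    constructor
    · have h1 := hlower a b
      have h2 : (wordDist S a b : ℝ) / (L₀ + 2 * C₀) ≤ (wordDist S a b : ℝ) :=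
        div_le_self (Nat.cast_nonneg _) (by linarith)
      linarith
    · have := hupper a b
      linarith
  · intro y
    obtain ⟨x, hx⟩ := hq.2 y
    refine ⟨x, ?_⟩
    have := wordDist_mono hT₀T hT₀gen y (q x)
    have h' : (wordDist T y (q x) : ℝ) ≤ (wordDist T₀ y (q x) : ℝ) := by exact_mod_cast this
    linarith
end

section
/- Let H be a normal subgroup of finite index in a group G, let T be a generating set of H, let R be a right transversal of H in G (every element of G is uniquely h·r with h ∈ H, r ∈ R), let q : G → H be the map with q(hr) = h, and let S = T ∪ R. Then for all a,b ∈ G, d_S(a,b) ≤ d_T(q(a),q(b)) + 2, where d_S is the word metric on G associated to S and d_T is the word metric on H associated to T. -/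
lemma exists_list_of_mem_closure' {G : Type*} [Group G] {s : Set G} {x : G}
    (h : x ∈ Subgroup.closure s) :
    ∃ l : List G, (∀ y ∈ l, y ∈ s ∨ y⁻¹ ∈ s) ∧ l.prod = x := by
  have h2 : x ∈ Submonoid.closure (s ∪ s⁻¹) := by
    rw [← Subgroup.closure_toSubmonoid] at *; exact h
  obtain ⟨l, hl, hp⟩ := Submonoid.exists_list_of_mem_closure h2
  exact ⟨l, fun y hy => by rcases hl y hy with h | h; exacts [Or.inl h, Or.inr h], hp⟩

theorem stmt6 {G : Type*} [Group G]
    (H : Subgroup G) [H.Normal] [H.FiniteIndex]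
    (T : Set H) (hTgen : Subgroup.closure T = ⊤)
    (R : Set G)
    (hR : ∀ g : G, ∃! p : H × R, (p.1 : G) * (p.2 : G) = g)
    (q : G → H)
    (hq : ∀ (h : H) (r : R), q ((h : G) * (r : G)) = h) :
    ∀ a b : G, wordDist ((Subtype.val '' T) ∪ R) a b ≤ wordDist T (q a) (q b) + 2 := by
  intro a b
  obtain ⟨pa, hpa, -⟩ := hR a
  obtain ⟨pb, hpb, -⟩ := hR b
  have hqa : q a = pa.1 := by rw [← hpa]; exact hq pa.1 pa.2
  have hqb : q b = pb.1 := by rw [← hpb]; exact hq pb.1 pb.2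
  -- the defining set of wordDist T (q a) (q b) is nonempty
  have hmem : ((q a)⁻¹ * q b) ∈ Subgroup.closure T := by rw [hTgen]; trivial
  obtain ⟨l0, hl0, hl0p⟩ := exists_list_of_mem_closure' hmem
  have hne : {n : ℕ | ∃ l : List H, (∀ x ∈ l, x ∈ T ∨ x⁻¹ ∈ T) ∧ l.length = n ∧
      l.prod = (q a)⁻¹ * q b}.Nonempty := ⟨l0.length, l0, hl0, rfl, hl0p⟩
  obtain ⟨l, hl, hlen, hlp⟩ := Nat.sInf_mem hne
  -- build a witness list in G
  refine Nat.sInf_le ⟨(pa.2 : G)⁻¹ :: (l.map Subtype.val ++ [(pb.2 : G)]), ?_, ?_, ?_⟩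
  · intro x hx
    rcases List.mem_cons.1 hx with rfl | hx
    · exact Or.inr (by simp [Or.inr pa.2.2])
    rcases List.mem_append.1 hx with hx | hx
    · obtain ⟨t, ht, rfl⟩ := List.mem_map.1 hx
      rcases hl t ht with h | h
      · exact Or.inl (Or.inl ⟨t, h, rfl⟩)
      · exact Or.inr (Or.inl ⟨t⁻¹, h, rfl⟩)
    · simp at hx; subst hx; exact Or.inl (Or.inr pb.2.2)
  · unfold wordDist
    simp only [List.length_cons, List.length_append, List.length_map,
      List.length_singleton, List.length_nil, ← hlen]
  · have hm : (l.map (Subtype.val : H → G)).prod = ((l.prod : H) : G) :=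
      (map_list_prod H.subtype l).symm
    rw [hqa, hqb] at hlp
    simp only [List.prod_cons, List.prod_append, List.prod_singleton, hm, hlp, ← hpa, ← hpb]
    push_cast
    group
    simp
end

section
/- Let G be a finitely generated group with a word metric d coming from a finite generating set, let H be a finite-index subgroup of G, and let 𝒬 be a finite collection of subgroups of H. Then the following are equivalent: (1) there exists M ≥ 0 such that for every g ∈ G and every Q ∈ 𝒬 there exist h ∈ H and Q' ∈ 𝒬 with Hdist(gQ, hQ') ≤ M; (2) for every g ∈ G and every Q ∈ 𝒬 there exist h ∈ H and Q' ∈ 𝒬 with Hdist(gQ, hQ') < ∞. -/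
open scoped Pointwise ENNReal

/-- Hausdorff distance (valued in `ℝ≥0∞`) between subsets of a group, with respect to the
word metric associated to `S`. -/
noncomputable def hdist {G : Type*} [Group G] (S : Set G) (A B : Set G) : ℝ≥0∞ :=
  max (⨆ a ∈ A, ⨅ b ∈ B, (wordDist S a b : ℝ≥0∞)) (⨆ b ∈ B, ⨅ a ∈ A, (wordDist S a b : ℝ≥0∞))

lemma wordDist_mul_left {G : Type*} [Group G] (S : Set G) (k a b : G) :
    wordDist S (k * a) (k * b) = wordDist S a b := by
  unfold wordDist
  congr 1
  ext n
  simp [mul_inv_rev, mul_assoc]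

lemma hdist_smul {G : Type*} [Group G] (S : Set G) (k : G) (A B : Set G) :
    hdist S (k • A) (k • B) = hdist S A B := by
  have hA : k • A = (fun x => k * x) '' A := rfl
  have hB : k • B = (fun x => k * x) '' B := rfl
  unfold hdist
  rw [hA, hB]
  congr 1
  · rw [iSup_image]
    refine iSup_congr fun a => iSup_congr fun _ => ?_
    rw [iInf_image]
    exact iInf_congr fun b => iInf_congr fun _ => by rw [wordDist_mul_left]
  · rw [iSup_image]
    refine iSup_congr fun b => iSup_congr fun _ => ?_
    rw [iInf_image]
    exact iInf_congr fun a => iInf_congr fun _ => by rw [wordDist_mul_left]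


set_option maxHeartbeats 1000000 in
theorem stmt7 {G : Type*} [Group G]
    (S : Set G) (hSfin : S.Finite) (hSgen : Subgroup.closure S = ⊤)
    (H : Subgroup G) [H.FiniteIndex]
    (𝒬 : Set (Subgroup G)) (h𝒬fin : 𝒬.Finite) (h𝒬H : ∀ Q ∈ 𝒬, Q ≤ H) :
    (∃ M : ℝ≥0∞, M ≠ ⊤ ∧ ∀ g : G, ∀ Q ∈ 𝒬, ∃ h ∈ H, ∃ Q' ∈ 𝒬,
        hdist S (g • (Q : Set G)) (h • (Q' : Set G)) ≤ M)
    ↔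
    (∀ g : G, ∀ Q ∈ 𝒬, ∃ h ∈ H, ∃ Q' ∈ 𝒬,
        hdist S (g • (Q : Set G)) (h • (Q' : Set G)) < ⊤) := by
  classical
  constructor
  · rintro ⟨M, hM, hMall⟩ g Q hQ
    obtain ⟨h, hh, Q', hQ', hle⟩ := hMall g Q hQ
    exact ⟨h, hh, Q', hQ', hle.trans_lt hM.lt_top⟩
  · intro h2
    haveI : Finite (G ⧸ H) := inferInstance
    haveI : Finite ↥𝒬 := h𝒬fin.to_subtype
    haveI : Fintype ((G ⧸ H) × ↥𝒬) := Fintype.ofFinite _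
    have key : ∀ i : (G ⧸ H) × ↥𝒬, ∃ h ∈ H, ∃ Q' ∈ 𝒬,
        hdist S ((Quotient.out i.1)⁻¹ • ((i.2 : Subgroup G) : Set G)) (h • (Q' : Set G)) < ⊤ :=
      fun i => h2 _ _ i.2.2
    choose w hw Q' hQ' hlt using key
    refine ⟨Finset.univ.sup (fun i : (G ⧸ H) × ↥𝒬 =>
        hdist S ((Quotient.out i.1)⁻¹ • ((i.2 : Subgroup G) : Set G)) (w i • ((Q' i : Subgroup G) : Set G))),
      ?_, ?_⟩
    · rw [← lt_top_iff_ne_top]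
      exact (Finset.sup_lt_iff bot_lt_top).2 fun i _ => hlt i
    · intro g Q hQ
      set c : G ⧸ H := QuotientGroup.mk g⁻¹ with hc
      have hmem : (Quotient.out c)⁻¹ * g⁻¹ ∈ H := by
        have h1 : (QuotientGroup.mk (Quotient.out c) : G ⧸ H) = QuotientGroup.mk g⁻¹ :=
          Quotient.out_eq c
        exact (QuotientGroup.eq).1 h1
      set i : (G ⧸ H) × ↥𝒬 := (c, ⟨Q, hQ⟩) with hi
      refine ⟨((Quotient.out c)⁻¹ * g⁻¹)⁻¹ * w i, H.mul_mem (H.inv_mem hmem) (hw i),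
        Q' i, hQ' i, ?_⟩
      have e1 : g • (Q : Set G)
          = ((Quotient.out c)⁻¹ * g⁻¹)⁻¹ • ((Quotient.out c)⁻¹ • (Q : Set G)) := by
        rw [← mul_smul]
        congr 1
        group
      have e2 : (((Quotient.out c)⁻¹ * g⁻¹)⁻¹ * w i) • ((Q' i : Subgroup G) : Set G)
          = ((Quotient.out c)⁻¹ * g⁻¹)⁻¹ • (w i • ((Q' i : Subgroup G) : Set G)) :=
        mul_smul _ _ _
      rw [e1, e2, hdist_smul]
      have hfin := Finset.le_sup (f := fun i : (G ⧸ H) × ↥𝒬 =>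
        hdist S ((Quotient.out i.1)⁻¹ • ((i.2 : Subgroup G) : Set G)) (w i • ((Q' i : Subgroup G) : Set G))) (Finset.mem_univ i)
      simp only [hi] at hfin ⊢
      exact hfin
end

section
/- Let F be the free group on two generators a and b, let T = {b} ∪ {aᵏ : k ∈ ℤ, k ≠ 0}, and let φ be the automorphism of F with φ(a) = b and φ(b) = a. Then φ is not a quasi-isometry of (F,d_T): for every L ≥ 1 and C ≥ 0 there exist u,v ∈ F with d_T(φ(u),φ(v)) > L·d_T(u,v) + C. -/
/-- The "b-exponent-sum" homomorphism on the free group on two generators. -/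
noncomputable def fcount : FreeGroup Bool →* Multiplicative ℤ :=
  FreeGroup.lift (fun x => if x then Multiplicative.ofAdd (1:ℤ) else 1)

lemma fcount_list (l : List (FreeGroup Bool))
    (h : ∀ x ∈ l, |Multiplicative.toAdd (fcount x)| ≤ 1) :
    |Multiplicative.toAdd (fcount l.prod)| ≤ (l.length : ℤ) := by
  induction l with
  | nil => simp
  | cons x t ih =>
    have h1 := h x (by simp)
    have h2 := ih (fun y hy => h y (by simp [hy]))
    simp only [List.prod_cons, map_mul, toAdd_mul, List.length_cons]
    calc |Multiplicative.toAdd (fcount x) + Multiplicative.toAdd (fcount t.prod)|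
        ≤ |Multiplicative.toAdd (fcount x)| + |Multiplicative.toAdd (fcount t.prod)| :=
          abs_add_le _ _
      _ ≤ 1 + t.length := add_le_add h1 h2
      _ = ((t.length + 1 : ℕ) : ℤ) := by push_cast; ring


theorem stmt13 (φ : MulAut (FreeGroup Bool))
    (hφa : φ (FreeGroup.of false) = FreeGroup.of true)
    (hφb : φ (FreeGroup.of true) = FreeGroup.of false)
    (T : Set (FreeGroup Bool))
    (hT : T = {FreeGroup.of true} ∪ {x | ∃ k : ℤ, k ≠ 0 ∧ x = FreeGroup.of false ^ k}) :
    ∀ L C : ℝ, 1 ≤ L → 0 ≤ C → ∃ u v : FreeGroup Bool,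
      (wordDist T (φ u) (φ v) : ℝ) > L * (wordDist T u v : ℝ) + C := by
  intro L C hL hC
  obtain ⟨n, hn⟩ : ∃ n : ℕ, L + C < n := by
    refine ⟨⌈L + C⌉₊ + 1, ?_⟩
    push_cast
    exact lt_of_le_of_lt (Nat.le_ceil _) (by norm_num)
  have hn0 : n ≠ 0 := by
    rintro rfl
    simp only [Nat.cast_zero] at hn
    linarith
  refine ⟨1, FreeGroup.of false ^ n, ?_⟩
  -- d(u,v) ≤ 1
  have hdu : wordDist T 1 (FreeGroup.of false ^ n) ≤ 1 := by
    apply Nat.sInf_le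
    refine ⟨[FreeGroup.of false ^ n], ?_, by simp, by simp⟩
    intro x hx
    simp only [List.mem_singleton] at hx
    subst hx
    left
    rw [hT]
    right
    exact ⟨(n:ℤ), by exact_mod_cast hn0, (zpow_natCast _ n).symm⟩
  have hφ1 : φ (1 : FreeGroup Bool) = 1 := map_one φ
  have hφv : φ (FreeGroup.of false ^ n) = FreeGroup.of true ^ n := by
    rw [map_pow, hφa]
  -- bound on fcount of elements of T ∪ T⁻¹
  have hTb : ∀ x ∈ T, |Multiplicative.toAdd (fcount x)| ≤ 1 := by
    intro x hx
    rw [hT] at hx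
    rcases hx with hx | ⟨k, hk, rfl⟩
    · simp only [Set.mem_singleton_iff] at hx
      subst hx
      simp [fcount]
    · rw [map_zpow]
      simp [fcount]
  have hTb' : ∀ x : FreeGroup Bool, (x ∈ T ∨ x⁻¹ ∈ T) →
      |Multiplicative.toAdd (fcount x)| ≤ 1 := by
    intro x hx
    rcases hx with hx | hx
    · exact hTb x hx
    · have := hTb _ hx
      rwa [map_inv, toAdd_inv, abs_neg] at this
  -- lower bound
  have hlow : n ≤ wordDist T (φ 1) (φ (FreeGroup.of false ^ n)) := by
    rw [hφ1, hφv]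
    apply le_csInf
    · refine ⟨n, List.replicate n (FreeGroup.of true), ?_, List.length_replicate .., by
        simp [List.prod_replicate]⟩
      intro x hx
      rw [List.eq_of_mem_replicate hx]
      left
      rw [hT]
      left
      rfl
    · rintro m ⟨l, hl, hlen, hprod⟩
      have hb := fcount_list l (fun x hx => hTb' x (hl x hx))
      rw [hprod] at hb
      have hfb : fcount ((1:FreeGroup Bool))⁻¹ * fcount (FreeGroup.of true ^ n)
          = Multiplicative.ofAdd (n:ℤ) := by
        have : fcount (FreeGroup.of true) = Multiplicative.ofAdd (1:ℤ) := by
          simp [fcount]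
        simp only [map_one, inv_one, one_mul, map_pow, this, ← ofAdd_nsmul]
        norm_num
      rw [map_mul, hfb] at hb
      rw [toAdd_ofAdd, abs_of_nonneg (by positivity), hlen] at hb
      exact_mod_cast hb
  -- conclude
  have h1 : (wordDist T 1 (FreeGroup.of false ^ n) : ℝ) ≤ 1 := by exact_mod_cast hdu
  have h2 : (n : ℝ) ≤ (wordDist T (φ 1) (φ (FreeGroup.of false ^ n)) : ℝ) := by
    exact_mod_cast hlow
  have h3 : L * (wordDist T 1 (FreeGroup.of false ^ n) : ℝ) ≤ L * 1 :=
    mul_le_mul_of_nonneg_left h1 (le_trans zero_le_one hL)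
  linarith
end
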